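/- Let m ≥ 1 and let k_1 ≥ 2, k_2,…,k_m ≥ 1 be integers, and let λ ∈ ℂ with |λ| < 1. Then the power series Σ_{l=0}^∞ ( Σ_{ε_1,…,ε_m ≥ 0, ε_1+⋯+ε_m = l} ζ(k_1+ε_1,…,k_m+ε_m) ) λ^l converges absolutely, the series Σ_{n_1 > n_2 > ⋯ > n_m > 0} ∏_{i=1}^m 1/(n_i^{k_i−1}(n_i − λ)) converges absolutely, and the two are equal. -/

import Mathlib

open Finset

/-- Strictly decreasing tuples of positive integers of length `m`. -/
def DTuple (m : ℕ) : Type :=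
  {n : Fin m → ℕ // StrictAnti n ∧ ∀ i, 0 < n i}


/-- tsum over a pi type of a product factorizes. -/
lemma pi_tsum_prod {𝕜 : Type*} [NormedField 𝕜] [CompleteSpace 𝕜] :
    ∀ {m : ℕ} (f : Fin m → ℕ → 𝕜), (∀ i, Summable fun n => ‖f i n‖) →
      (Summable fun ε : Fin m → ℕ => ‖∏ i, f i (ε i)‖) ∧
      ((∑' ε : Fin m → ℕ, ∏ i, f i (ε i)) = ∏ i, ∑' n, f i n) := by
  intro m
  induction m with
  | zero =>
    intro f _
    have hz : ∀ (g : (Fin 0 → ℕ) → 𝕜) (b : Fin 0 → ℕ), b ≠ default → g b = 0 :=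
      fun g b hb => absurd (Subsingleton.elim b default) hb
    constructor
    · exact (hasSum_single (f := fun ε : Fin 0 → ℕ => ‖∏ i, f i (ε i)‖) default
        (fun b hb => absurd (Subsingleton.elim b default) hb)).summable
    · rw [tsum_eq_single default (fun b hb => absurd (Subsingleton.elim b default) hb)]
      simp
  | succ m ih =>
    intro f hf
    set e := Fin.consEquiv (fun _ : Fin (m + 1) => ℕ) with he
    obtain ⟨S2, T2⟩ := ih (fun i => f i.succ) (fun i => hf i.succ)
    have key : ∀ p : ℕ × (Fin m → ℕ),
        (∏ i, f i (e p i)) = f 0 p.1 * ∏ i : Fin m, f i.succ (p.2 i) := by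
      intro p
      rw [Fin.prod_univ_succ]
      simp [he, Fin.consEquiv]
    have h1 : Summable fun p : ℕ × (Fin m → ℕ) => ‖∏ i, f i (e p i)‖ :=
      ((hf 0).mul_norm S2).congr fun p => (congrArg norm (key p)).symm
    constructor
    · exact e.summable_iff.mp h1
    · rw [← e.tsum_eq]
      calc ∑' p : ℕ × (Fin m → ℕ), ∏ i, f i (e p i)
          = ∑' p : ℕ × (Fin m → ℕ), f 0 p.1 * ∏ i : Fin m, f i.succ (p.2 i) :=
            tsum_congr key
        _ = (∑' a : ℕ, f 0 a) * ∑' b : Fin m → ℕ, ∏ i : Fin m, f i.succ (b i) :=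
            (tsum_mul_tsum_of_summable_norm (hf 0) S2).symm
        _ = ∏ i : Fin (m + 1), ∑' n : ℕ, f i n := by
            rw [T2, Fin.prod_univ_succ]

/-- Equiv grouping tuples by their sum. -/
def degEquiv (m : ℕ) :
    (Fin m → ℕ) ≃ (Σ l : ℕ, {x // x ∈ Finset.Nat.antidiagonalTuple m l}) where
  toFun ε := ⟨∑ i, ε i, ⟨ε, Finset.Nat.mem_antidiagonalTuple.mpr rfl⟩⟩
  invFun p := p.2.1
  left_inv ε := rfl
  right_inv := fun ⟨l, x, hx⟩ => by
    have h := Finset.Nat.mem_antidiagonalTuple.mp hx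
    subst h
    rfl

/-- Group a tsum over tuples by total degree. -/
lemma tsum_by_degree {α : Type*} [AddCommGroup α] [UniformSpace α] [IsUniformAddGroup α]
    [CompleteSpace α] [T0Space α] {m : ℕ} {f : (Fin m → ℕ) → α} (hf : Summable f) :
    (Summable fun l : ℕ => ∑ ε ∈ Finset.Nat.antidiagonalTuple m l, f ε) ∧
      ∑' ε : Fin m → ℕ, f ε = ∑' l : ℕ, ∑ ε ∈ Finset.Nat.antidiagonalTuple m l, f ε := by
  set e := degEquiv m with he
  have hg : Summable fun p : Σ l : ℕ, {x // x ∈ Finset.Nat.antidiagonalTuple m l} => f p.2.1 :=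
    e.symm.summable_iff.mpr hf
  have hfib : ∀ l : ℕ, Summable fun c : {x // x ∈ Finset.Nat.antidiagonalTuple m l} => f c.1 :=
    fun l => Summable.of_finite
  constructor
  · exact (hg.sigma' hfib).congr fun l => by
      rw [Finset.tsum_subtype]
  · calc ∑' ε : Fin m → ℕ, f ε = ∑' p : Σ l : ℕ, {x // x ∈ Finset.Nat.antidiagonalTuple m l},
          f p.2.1 := (e.symm.tsum_eq _).symm
      _ = ∑' l : ℕ, ∑' c : {x // x ∈ Finset.Nat.antidiagonalTuple m l}, f c.1 := hg.tsum_sigma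
      _ = ∑' l : ℕ, ∑ ε ∈ Finset.Nat.antidiagonalTuple m l, f ε := by
          exact tsum_congr fun l => Finset.tsum_subtype _ _

lemma dtuple_summable (m : ℕ) (hm : 1 ≤ m) (k : Fin m → ℕ)
    (hk0 : 2 ≤ k ⟨0, hm⟩) (hk : ∀ i, 1 ≤ k i) :
    Summable fun n : DTuple m => ∏ i, (1 : ℝ) / (n.1 i : ℝ) ^ k i := by
  have hm0 : (m : ℝ) ≠ 0 := Nat.cast_ne_zero.mpr (by omega)
  set p : ℝ := 1 + 1 / m with hp
  have hp1 : 1 < p := by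
    have : 0 < 1 / (m : ℝ) := by positivity
    simp [hp]; linarith
  set h : ℕ → ℝ := fun n => 1 / (n : ℝ) ^ p with hh
  have hsum_h : Summable h := Real.summable_one_div_nat_rpow.mpr hp1
  have hh0 : ∀ n, 0 ≤ h n := fun n => by positivity
  -- summable over the full pi type
  have hpi : Summable fun ε : Fin m → ℕ => ∏ i, h (ε i) := by
    have := (pi_tsum_prod (𝕜 := ℝ) (fun _ : Fin m => h)
      (fun i => hsum_h.congr fun n => (Real.norm_of_nonneg (hh0 n)).symm)).1
    exact this.of_norm
  -- restrict to DTuple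
  have hsub : Summable fun n : DTuple m => ∏ i, h (n.1 i) := by
    have hinj : Function.Injective (fun n : DTuple m => n.1) := Subtype.val_injective
    exact (hpi.comp_injective hinj)
  refine Summable.of_nonneg_of_le (fun n => by positivity) (fun n => ?_) hsub
  -- the pointwise bound
  set i0 : Fin m := ⟨0, hm⟩ with hi0
  have hpos : ∀ i, 0 < n.1 i := n.2.2
  have hR1 : ∀ i, (1 : ℝ) ≤ (n.1 i : ℝ) := fun i => by exact_mod_cast hpos i
  have hle0 : ∀ i, n.1 i ≤ n.1 i0 := fun i => n.2.1.antitone (Fin.mk_le_of_le_val (Nat.zero_le _))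
  -- Nat claim : n_{i0} * ∏ n_i ≤ ∏ n_i ^ k_i
  have claimNat : n.1 i0 * ∏ i, n.1 i ≤ ∏ i, n.1 i ^ k i := by
    rw [← Finset.mul_prod_erase univ _ (mem_univ i0),
        ← Finset.mul_prod_erase univ (fun i => n.1 i ^ k i) (mem_univ i0), ← mul_assoc]
    have h1 : n.1 i0 * n.1 i0 ≤ n.1 i0 ^ k i0 := by
      calc n.1 i0 * n.1 i0 = n.1 i0 ^ 2 := (sq (n.1 i0)).symm
        _ ≤ n.1 i0 ^ k i0 := Nat.pow_le_pow_right (hpos i0) hk0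
    exact Nat.mul_le_mul h1 (Finset.prod_le_prod' fun i _ =>
      Nat.le_self_pow (by have := hk i; omega) _)
  -- Real claim : ∏ (n_i)^p ≤ n_{i0} * ∏ n_i
  have claimR : ∏ i, ((n.1 i : ℝ)) ^ p ≤ (n.1 i0 : ℝ) * ∏ i, (n.1 i : ℝ) := by
    have e1 : ∀ i, ((n.1 i : ℝ)) ^ p = (n.1 i : ℝ) * ((n.1 i : ℝ)) ^ (1 / (m : ℝ)) := by
      intro i
      rw [hp, Real.rpow_add (by exact_mod_cast hpos i), Real.rpow_one]
    calc ∏ i, ((n.1 i : ℝ)) ^ p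
        = (∏ i, (n.1 i : ℝ)) * ∏ i, ((n.1 i : ℝ)) ^ (1 / (m : ℝ)) := by
          rw [← Finset.prod_mul_distrib]; exact Finset.prod_congr rfl fun i _ => e1 i
      _ ≤ (∏ i, (n.1 i : ℝ)) * ∏ _i : Fin m, ((n.1 i0 : ℝ)) ^ (1 / (m : ℝ)) := by
          refine mul_le_mul_of_nonneg_left (Finset.prod_le_prod (fun i _ => by positivity)
            (fun i _ => Real.rpow_le_rpow (by positivity) (by exact_mod_cast hle0 i)
              (by positivity))) (Finset.prod_nonneg fun i _ => by positivity)
      _ = (∏ i, (n.1 i : ℝ)) * (n.1 i0 : ℝ) := by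
          rw [Finset.prod_const, card_univ, Fintype.card_fin, ← Real.rpow_natCast
            (((n.1 i0 : ℝ)) ^ (1 / (m : ℝ))) m, ← Real.rpow_mul (by positivity),
            one_div_mul_cancel hm0, Real.rpow_one]
      _ = (n.1 i0 : ℝ) * ∏ i, (n.1 i : ℝ) := mul_comm _ _
  -- combine
  have hprod_pos : 0 < ∏ i, ((n.1 i : ℝ)) ^ p := Finset.prod_pos fun i _ => Real.rpow_pos_of_pos (by exact_mod_cast hpos i) _
  have final : ∏ i, ((n.1 i : ℝ)) ^ p ≤ ∏ i, ((n.1 i : ℝ)) ^ (k i) := by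
    refine claimR.trans ?_
    have : ((n.1 i0 * ∏ i, n.1 i : ℕ) : ℝ) ≤ ((∏ i, n.1 i ^ k i : ℕ) : ℝ) := by
      exact_mod_cast claimNat
    push_cast at this
    exact this
  calc ∏ i, (1 : ℝ) / (n.1 i : ℝ) ^ k i = (∏ i, ((n.1 i : ℝ)) ^ (k i))⁻¹ := by
        rw [← Finset.prod_inv_distrib]; exact Finset.prod_congr rfl fun i _ => one_div _
    _ ≤ (∏ i, ((n.1 i : ℝ)) ^ p)⁻¹ := inv_anti₀ hprod_pos final
    _ = ∏ i, h (n.1 i) := by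
        rw [← Finset.prod_inv_distrib]; exact Finset.prod_congr rfl fun i _ => (one_div _).symm

/-- The multiple zeta value `ζ(k₁,…,k_m) = Σ_{n₁ > ⋯ > n_m > 0} ∏ 1/nᵢ^{kᵢ}`. -/
noncomputable def mzv (m : ℕ) (k : Fin m → ℕ) : ℝ :=
  ∑' n : DTuple m, ∏ i, (1 : ℝ) / (n.1 i : ℝ) ^ k i

open Finset in
set_option maxHeartbeats 2000000 in
/-- The generating series `Σ_l (Σ_{|ε|=l} ζ(k+ε)) λ^l` converges absolutely for `|λ| < 1`,
the series `Σ_{n₁>⋯>n_m>0} ∏ 1/(nᵢ^{kᵢ-1}(nᵢ-λ))` converges absolutely, and they are equal. -/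
theorem generating_series_eq (m : ℕ) (hm : 1 ≤ m) (k : Fin m → ℕ)
    (hk0 : 2 ≤ k ⟨0, hm⟩) (hk : ∀ i, 1 ≤ k i)
    (lam : ℂ) (hlam : ‖lam‖ < 1) :
    Summable (fun l : ℕ =>
      ‖((∑ ε ∈ Finset.Nat.antidiagonalTuple m l, mzv m fun i => k i + ε i : ℝ) : ℂ)
        * lam ^ l‖) ∧
    Summable (fun n : DTuple m =>
      ‖∏ i, 1 / ((n.1 i : ℂ) ^ (k i - 1) * ((n.1 i : ℂ) - lam))‖) ∧
    (∑' l : ℕ,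
        ((∑ ε ∈ Finset.Nat.antidiagonalTuple m l, mzv m fun i => k i + ε i : ℝ) : ℂ)
          * lam ^ l)
      = ∑' n : DTuple m, ∏ i, 1 / ((n.1 i : ℂ) ^ (k i - 1) * ((n.1 i : ℂ) - lam)) := by
  set r : ℝ := ‖lam‖ with hrdef
  have hr0 : 0 ≤ r := norm_nonneg lam
  have hr1 : r < 1 := hlam
  have h1r : 0 < 1 - r := by linarith
  have hnormlam : ‖lam‖ = r := rfl
  -- basic facts
  have hpos : ∀ (n : DTuple m) (i : Fin m), 0 < n.1 i := fun n => n.2.2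
  have hR1 : ∀ (n : DTuple m) (i : Fin m), (1 : ℝ) ≤ (n.1 i : ℝ) := fun n i => by
    exact_mod_cast hpos n i
  have hC0 : ∀ (n : DTuple m) (i : Fin m), (n.1 i : ℂ) ≠ 0 := fun n i =>
    Nat.cast_ne_zero.mpr (hpos n i).ne'
  have hCnorm : ∀ (n : DTuple m) (i : Fin m), ‖(n.1 i : ℂ)‖ = (n.1 i : ℝ) := fun n i =>
    Complex.norm_natCast _
  have hsub : ∀ (n : DTuple m) (i : Fin m), (n.1 i : ℂ) - lam ≠ 0 := by
    intro n i h
    have h2 : (n.1 i : ℂ) = lam := by linear_combination h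
    rw [← hnormlam, ← h2, hCnorm] at hr1
    exact absurd hr1 (not_lt.mpr (hR1 n i))
  -- the double families
  set F : DTuple m × (Fin m → ℕ) → ℂ :=
    fun p => ∏ i, lam ^ (p.2 i) / (p.1.1 i : ℂ) ^ (k i + p.2 i) with hF
  set G : DTuple m × (Fin m → ℕ) → ℝ :=
    fun p => ∏ i, r ^ (p.2 i) / (p.1.1 i : ℝ) ^ (k i + p.2 i) with hG
  have normF : ∀ p, ‖F p‖ = G p := by
    intro p
    rw [hF, hG]
    simp [norm_prod, norm_div, norm_pow, Complex.norm_natCast, hnormlam]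
  have Gnonneg : ∀ p, 0 ≤ G p := fun p =>
    Finset.prod_nonneg fun i _ => div_nonneg (pow_nonneg hr0 _) (by positivity)
  -- per-index factor functions
  have hdivlt : ∀ (n : DTuple m) (i : Fin m), r / (n.1 i : ℝ) < 1 := fun n i =>
    (div_le_self hr0 (hR1 n i)).trans_lt hr1
  have hdiv0 : ∀ (n : DTuple m) (i : Fin m), 0 ≤ r / (n.1 i : ℝ) := fun n i => by positivity
  have hfR_eq : ∀ (n : DTuple m) (i : Fin m) (e : ℕ),
      r ^ e / (n.1 i : ℝ) ^ (k i + e) =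
        (1 / (n.1 i : ℝ) ^ k i) * (r / (n.1 i : ℝ)) ^ e := by
    intro n i e
    rw [div_pow, pow_add]
    ring
  have hfC_eq : ∀ (n : DTuple m) (i : Fin m) (e : ℕ),
      lam ^ e / (n.1 i : ℂ) ^ (k i + e) =
        (1 / (n.1 i : ℂ) ^ k i) * (lam / (n.1 i : ℂ)) ^ e := by
    intro n i e
    rw [div_pow, pow_add]
    ring
  have hfR_sum : ∀ (n : DTuple m) (i : Fin m),
      Summable fun e : ℕ => r ^ e / (n.1 i : ℝ) ^ (k i + e) := by
    intro n i
    refine (Summable.mul_left _ (summable_geometric_of_lt_one (hdiv0 n i) (hdivlt n i))).congr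
      fun e => (hfR_eq n i e).symm
  have hfR_nonneg : ∀ (n : DTuple m) (i : Fin m) (e : ℕ),
      0 ≤ r ^ e / (n.1 i : ℝ) ^ (k i + e) := fun n i e =>
    div_nonneg (pow_nonneg hr0 _) (by positivity)
  have hfR_normsum : ∀ (n : DTuple m) (i : Fin m),
      Summable fun e : ℕ => ‖r ^ e / (n.1 i : ℝ) ^ (k i + e)‖ := fun n i =>
    (hfR_sum n i).congr fun e => (Real.norm_of_nonneg (hfR_nonneg n i e)).symm
  have hfC_normsum : ∀ (n : DTuple m) (i : Fin m),
      Summable fun e : ℕ => ‖lam ^ e / (n.1 i : ℂ) ^ (k i + e)‖ := by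
    intro n i
    refine (hfR_sum n i).congr fun e => ?_
    rw [norm_div, norm_pow, norm_pow, Complex.norm_natCast, hnormlam]
  -- pi factorizations
  have piR := fun n : DTuple m =>
    pi_tsum_prod (𝕜 := ℝ) (fun i e => r ^ e / (n.1 i : ℝ) ^ (k i + e)) (hfR_normsum n)
  have piC := fun n : DTuple m =>
    pi_tsum_prod (𝕜 := ℂ) (fun i e => lam ^ e / (n.1 i : ℂ) ^ (k i + e)) (hfC_normsum n)
  -- (i) fiberwise summability of G
  have sumGi : ∀ n : DTuple m, Summable fun ε : Fin m → ℕ => G (n, ε) :=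
    fun n => ((piR n).1).of_norm
  -- value of fiber sums of the real geometric series
  have tsum_fR : ∀ (n : DTuple m) (i : Fin m),
      ∑' e : ℕ, r ^ e / (n.1 i : ℝ) ^ (k i + e) =
        (1 / (n.1 i : ℝ) ^ k i) * (1 - r / (n.1 i : ℝ))⁻¹ := by
    intro n i
    rw [tsum_congr (hfR_eq n i), tsum_mul_left,
      tsum_geometric_of_lt_one (hdiv0 n i) (hdivlt n i)]
  have fiber_bound : ∀ n : DTuple m,
      (∑' ε : Fin m → ℕ, G (n, ε)) ≤ (∏ i, (1 : ℝ) / (n.1 i : ℝ) ^ k i) * ((1 - r)⁻¹) ^ m := by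
    intro n
    have h1 : (∑' ε : Fin m → ℕ, G (n, ε)) = ∏ i, (1 / (n.1 i : ℝ) ^ k i) *
        (1 - r / (n.1 i : ℝ))⁻¹ := by
      rw [(piR n).2]
      exact Finset.prod_congr rfl fun i _ => tsum_fR n i
    rw [h1]
    rw [show ((1 - r)⁻¹) ^ m = ∏ _i : Fin m, (1 - r)⁻¹ by
      rw [Finset.prod_const, card_univ, Fintype.card_fin]]
    rw [← Finset.prod_mul_distrib]
    have hnz : ∀ i : Fin m, (0:ℝ) ≤ 1 - r / (n.1 i : ℝ) := fun i => by
      have := hdivlt n i; linarith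
    refine Finset.prod_le_prod
      (fun i _ => mul_nonneg (by positivity) (inv_nonneg.mpr (hnz i))) fun i _ => ?_
    refine mul_le_mul_of_nonneg_left ?_ (by positivity)
    refine inv_anti₀ h1r (sub_le_sub_left (div_le_self hr0 (hR1 n i)) 1)
  -- (ii)
  have sumGii : Summable fun n : DTuple m => ∑' ε : Fin m → ℕ, G (n, ε) := by
    refine Summable.of_nonneg_of_le (fun n => tsum_nonneg fun ε => Gnonneg _)
      fiber_bound ((dtuple_summable m hm k hk0 hk).mul_right _)
  have SG : Summable G :=
    (summable_prod_of_nonneg (fun p => Gnonneg p)).mpr ⟨sumGi, sumGii⟩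
  have SFnorm : Summable fun p => ‖F p‖ := SG.congr fun p => (normF p).symm
  have SF : Summable F := SFnorm.of_norm
  -- B2 : fiber sums of F in the (n, ·) direction
  have tsum_fC : ∀ (n : DTuple m) (i : Fin m),
      ∑' e : ℕ, lam ^ e / (n.1 i : ℂ) ^ (k i + e) =
        1 / ((n.1 i : ℂ) ^ (k i - 1) * ((n.1 i : ℂ) - lam)) := by
    intro n i
    have hnormdiv : ‖lam / (n.1 i : ℂ)‖ < 1 := by
      rw [norm_div, Complex.norm_natCast, hnormlam]
      exact hdivlt n i
    rw [tsum_congr (hfC_eq n i), tsum_mul_left, tsum_geometric_of_norm_lt_one hnormdiv]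
    obtain ⟨j, hj⟩ : ∃ j, k i = j + 1 := ⟨k i - 1, (Nat.succ_pred_eq_of_pos (hk i)).symm⟩
    have h2 : (1 : ℂ) - lam / (n.1 i : ℂ) = ((n.1 i : ℂ) - lam) / (n.1 i : ℂ) := by
      rw [eq_div_iff (hC0 n i), sub_mul, one_mul, div_mul_cancel₀ _ (hC0 n i)]
    rw [h2, inv_div, hj]
    have hkj : j + 1 - 1 = j := rfl
    rw [hkj, pow_succ, div_mul_div_comm, one_mul]
    rw [div_eq_div_iff
      (mul_ne_zero (mul_ne_zero (pow_ne_zero _ (hC0 n i)) (hC0 n i)) (hsub n i))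
      (mul_ne_zero (pow_ne_zero _ (hC0 n i)) (hsub n i))]
    ring
  have B2 : ∀ n : DTuple m,
      (∑' ε : Fin m → ℕ, F (n, ε)) =
        ∏ i, 1 / ((n.1 i : ℂ) ^ (k i - 1) * ((n.1 i : ℂ) - lam)) := by
    intro n
    rw [(piC n).2]
    exact Finset.prod_congr rfl fun i _ => tsum_fC n i
  -- conjunct 2
  have SFnorm_fiber : ∀ n : DTuple m, Summable fun ε : Fin m → ℕ => ‖F (n, ε)‖ :=
    fun n => (sumGi n).congr fun ε => (normF (n, ε)).symm
  have conj2 : Summable (fun n : DTuple m =>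
      ‖∏ i, 1 / ((n.1 i : ℂ) ^ (k i - 1) * ((n.1 i : ℂ) - lam))‖) := by
    refine Summable.of_nonneg_of_le (fun n => norm_nonneg _) (fun n => ?_) sumGii
    rw [← B2 n]
    refine (norm_tsum_le_tsum_norm (SFnorm_fiber n)).trans_eq ?_
    exact tsum_congr fun ε => normF (n, ε)
  -- swap direction
  set e2 : (Fin m → ℕ) × DTuple m ≃ DTuple m × (Fin m → ℕ) :=
    Equiv.prodComm _ _ with he2
  have SF2 : Summable (F ∘ e2) := e2.summable_iff.mpr SF
  have SG2 : Summable fun q : (Fin m → ℕ) × DTuple m => ‖F (q.2, q.1)‖ :=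
    e2.summable_iff.mpr SFnorm
  set Φ : (Fin m → ℕ) → ℂ := fun ε => ∑' n : DTuple m, F (n, ε) with hΦ
  have SΦ : Summable Φ := SF2.prod
  have SΦbound : Summable fun ε : Fin m → ℕ => ∑' n : DTuple m, ‖F (n, ε)‖ := SG2.prod
  have SΦn : Summable fun ε => ‖Φ ε‖ := by
    refine Summable.of_nonneg_of_le (fun ε => norm_nonneg _) (fun ε => ?_) SΦbound
    exact norm_tsum_le_tsum_norm (SG2.prod_factor ε)
  -- value of Φ
  have Φeq : ∀ ε : Fin m → ℕ,
      Φ ε = lam ^ (∑ i, ε i) * ((mzv m fun i => k i + ε i : ℝ) : ℂ) := by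
    intro ε
    have hmzv : ((mzv m fun i => k i + ε i : ℝ) : ℂ) =
        ∑' n : DTuple m, ∏ i, (1 : ℂ) / (n.1 i : ℂ) ^ (k i + ε i) := by
      rw [mzv, Complex.ofReal_tsum]
      exact tsum_congr fun n => by push_cast; rfl
    rw [hΦ, hmzv, ← tsum_mul_left]
    refine tsum_congr fun n => ?_
    rw [hF]
    calc (∏ i, lam ^ ε i / (n.1 i : ℂ) ^ (k i + ε i))
        = ∏ i, lam ^ ε i * ((1 : ℂ) / (n.1 i : ℂ) ^ (k i + ε i)) :=
          Finset.prod_congr rfl fun i _ => by rw [div_eq_mul_one_div]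
      _ = (∏ i, lam ^ ε i) * ∏ i, (1 : ℂ) / (n.1 i : ℂ) ^ (k i + ε i) :=
          Finset.prod_mul_distrib
      _ = lam ^ (∑ i, ε i) * ∏ i, (1 : ℂ) / (n.1 i : ℂ) ^ (k i + ε i) := by
          rw [Finset.prod_pow_eq_pow_sum]
  -- mzv nonneg
  have mzv_nonneg : ∀ (k' : Fin m → ℕ), 0 ≤ mzv m k' := fun k' =>
    tsum_nonneg fun n => Finset.prod_nonneg fun i _ => by positivity
  -- degree grouping
  obtain ⟨degS, degE⟩ := tsum_by_degree SΦ
  obtain ⟨degSn, _⟩ := tsum_by_degree SΦn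
  -- per-degree sums
  have perdeg : ∀ l : ℕ, ∑ ε ∈ Finset.Nat.antidiagonalTuple m l, Φ ε =
      ((∑ ε ∈ Finset.Nat.antidiagonalTuple m l, mzv m fun i => k i + ε i : ℝ) : ℂ)
        * lam ^ l := by
    intro l
    rw [Complex.ofReal_sum, Finset.sum_mul]
    refine Finset.sum_congr rfl fun ε hε => ?_
    rw [Φeq ε, Finset.Nat.mem_antidiagonalTuple.mp hε, mul_comm]
  have perdegn : ∀ l : ℕ, ∑ ε ∈ Finset.Nat.antidiagonalTuple m l, ‖Φ ε‖ =
      ‖((∑ ε ∈ Finset.Nat.antidiagonalTuple m l, mzv m fun i => k i + ε i : ℝ) : ℂ)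
        * lam ^ l‖ := by
    intro l
    rw [norm_mul, norm_pow, hnormlam, Complex.norm_real, Real.norm_of_nonneg
      (Finset.sum_nonneg fun ε _ => mzv_nonneg _), Finset.sum_mul]
    refine Finset.sum_congr rfl fun ε hε => ?_
    rw [Φeq ε, norm_mul, norm_pow, hnormlam, Complex.norm_real,
      Real.norm_of_nonneg (mzv_nonneg _), Finset.Nat.mem_antidiagonalTuple.mp hε, mul_comm]
  -- conjunct 1
  have conj1 : Summable (fun l : ℕ =>
      ‖((∑ ε ∈ Finset.Nat.antidiagonalTuple m l, mzv m fun i => k i + ε i : ℝ) : ℂ)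
        * lam ^ l‖) := degSn.congr perdegn
  refine ⟨conj1, conj2, ?_⟩
  calc (∑' l : ℕ,
        ((∑ ε ∈ Finset.Nat.antidiagonalTuple m l, mzv m fun i => k i + ε i : ℝ) : ℂ)
          * lam ^ l)
      = ∑' l : ℕ, ∑ ε ∈ Finset.Nat.antidiagonalTuple m l, Φ ε :=
        tsum_congr fun l => (perdeg l).symm
    _ = ∑' ε : Fin m → ℕ, Φ ε := degE.symm
    _ = ∑' q : (Fin m → ℕ) × DTuple m, F (e2 q) := (SF2.tsum_prod).symm
    _ = ∑' p : DTuple m × (Fin m → ℕ), F p := e2.tsum_eq F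
    _ = ∑' n : DTuple m, ∑' ε : Fin m → ℕ, F (n, ε) := SF.tsum_prod
    _ = ∑' n : DTuple m, ∏ i, 1 / ((n.1 i : ℂ) ^ (k i - 1) * ((n.1 i : ℂ) - lam)) :=
        tsum_congr B2
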